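/- Let A be a commutative semisimple complex unital Banach algebra. If a, b ∈ A satisfy σ(a·x) = σ(b·x) for all x ∈ A, then a = b. -/

import Mathlib

open WeakDual NormedSpace

section aux
variable {A : Type*} [NormedCommRing A] [NormedAlgebra ℂ A] [CompleteSpace A] [NormOneClass A]

/-- The series `∑ β^(n+1)/(n+1)! • y^n`, formally `(exp (β y) - 1)/y`. -/
noncomputable def auxT (β : ℂ) (y : A) : A :=
  ∑' n : ℕ, (β ^ (n + 1) * (((n + 1).factorial : ℂ))⁻¹) • y ^ n

lemma auxT_summable (β : ℂ) (y : A) :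
    Summable fun n : ℕ => (β ^ (n + 1) * (((n + 1).factorial : ℂ))⁻¹) • y ^ n := by
  refine Summable.of_norm_bounded (g := fun n => ‖β‖ * ((‖β‖ * ‖y‖) ^ n / n.factorial)) ?_ ?_
  · exact (Real.summable_pow_div_factorial (‖β‖ * ‖y‖)).mul_left ‖β‖
  · intro n
    rw [norm_smul]
    have h1 : ‖β ^ (n + 1) * (((n + 1).factorial : ℂ))⁻¹‖
        = ‖β‖ ^ (n + 1) * (((n + 1).factorial : ℝ))⁻¹ := by
      rw [norm_mul, norm_pow, norm_inv]
      norm_cast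
    rw [h1]
    have h2 : ‖y ^ n‖ ≤ ‖y‖ ^ n := norm_pow_le y n
    have h3 : (((n + 1).factorial : ℝ))⁻¹ ≤ ((n.factorial : ℝ))⁻¹ := by
      apply inv_anti₀
      · positivity
      · exact_mod_cast Nat.factorial_le (Nat.le_succ n)
    calc ‖β‖ ^ (n + 1) * (((n + 1).factorial : ℝ))⁻¹ * ‖y ^ n‖
        ≤ ‖β‖ ^ (n + 1) * ((n.factorial : ℝ))⁻¹ * ‖y‖ ^ n := by
          apply mul_le_mul _ h2 (norm_nonneg _) (by positivity)
          apply mul_le_mul_of_nonneg_left h3 (by positivity)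
      _ = ‖β‖ * ((‖β‖ * ‖y‖) ^ n / n.factorial) := by ring

lemma auxT_hasSum (β : ℂ) (y : A) :
    HasSum (fun n : ℕ => (β ^ (n + 1) * (((n + 1).factorial : ℂ))⁻¹) • y ^ n) (auxT β y) :=
  (auxT_summable β y).hasSum

lemma mul_auxT (β : ℂ) (y : A) : y * auxT β y = exp (β • y) - 1 := by
  have h1 : HasSum (fun n : ℕ => (β ^ (n + 1) * (((n + 1).factorial : ℂ))⁻¹) • y ^ (n + 1))
      (y * auxT β y) := by
    have := (auxT_hasSum β y).mul_left y
    simpa only [mul_smul_comm, ← pow_succ'] using this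
  have h2 : HasSum (fun n : ℕ => ((n.factorial : ℂ))⁻¹ • (β • y) ^ n) (exp (β • y)) :=
    exp_series_hasSum_exp' (𝕂 := ℂ) (β • y)
  have h3 : HasSum (fun n : ℕ => ((n + 1).factorial : ℂ)⁻¹ • (β • y) ^ (n + 1))
      (exp (β • y) - ((0).factorial : ℂ)⁻¹ • (β • y) ^ 0) := by
    have := (hasSum_nat_add_iff' (f := fun n : ℕ => ((n.factorial : ℂ))⁻¹ • (β • y) ^ n) 1).mpr h2
    simpa using this
  have h4 : (fun n : ℕ => ((n + 1).factorial : ℂ)⁻¹ • (β • y) ^ (n + 1))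
      = fun n : ℕ => (β ^ (n + 1) * (((n + 1).factorial : ℂ))⁻¹) • y ^ (n + 1) := by
    funext n
    rw [smul_pow, smul_smul, mul_comm]
  rw [h4] at h3
  simp only [Nat.factorial_zero, Nat.cast_one, inv_one, pow_zero, one_smul] at h3
  exact h1.unique h3

lemma phi_auxT (β : ℂ) (y : A) (φ : characterSpace ℂ A) :
    φ (auxT β y) = auxT β (φ y) := by
  have h1 : HasSum (fun n : ℕ => φ ((β ^ (n + 1) * (((n + 1).factorial : ℂ))⁻¹) • y ^ n))
      (φ (auxT β y)) :=
    (auxT_hasSum β y).map (AddMonoidHomClass.toAddMonoidHom φ) (map_continuous φ)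
  have h2 : (fun n : ℕ => φ ((β ^ (n + 1) * (((n + 1).factorial : ℂ))⁻¹) • y ^ n))
      = fun n : ℕ => (β ^ (n + 1) * (((n + 1).factorial : ℂ))⁻¹) • (φ y) ^ n := by
    funext n
    rw [map_smul, map_pow]
  rw [h2] at h1
  exact h1.tsum_eq.symm.trans rfl

/-- Key step: if `σ(ax) = σ(bx)` for all `x` and `φ a ≠ 0` for a character `φ`,
then `φ a = φ b`. -/
lemma char_eq_of_spec_eq (a b : A)
    (h : ∀ x : A, spectrum ℂ (a * x) = spectrum ℂ (b * x))
    (φ : characterSpace ℂ A) (hμ : φ a ≠ 0) : φ a = φ b := by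
  by_contra hne
  set μ := φ a with hμdef
  set l := φ b with hldef
  -- choose β with μ * (- auxT β l) = 1
  obtain ⟨β, hβ⟩ : ∃ β : ℂ, μ * (-(auxT β l)) = 1 := by
    rcases eq_or_ne l 0 with hl | hl
    · refine ⟨-μ⁻¹, ?_⟩
      have hT : auxT (-μ⁻¹) l = -μ⁻¹ := by
        rw [hl]
        have := (auxT_hasSum (A := ℂ) (-μ⁻¹) 0).tsum_eq.symm
        rw [this, tsum_eq_single 0]
        · simp
        · intro n hn
          have : (0 : ℂ) ^ n = 0 := zero_pow hn
          simp [this]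
      rw [hT]
      simp [mul_inv_cancel₀ hμ]
    · -- l ≠ 0 : take β = log((μ - l)/μ) / l
      set β := Complex.log ((μ - l) / μ) / l with hβdef
      have hexp : exp (β • l) = (μ - l) / μ := by
        rw [← Complex.exp_eq_exp_ℂ, smul_eq_mul, div_mul_cancel₀ _ hl]
        exact Complex.exp_log (div_ne_zero (sub_ne_zero.mpr hne) hμ)
      have hkey : l * auxT β l = -(l / μ) := by
        rw [mul_auxT β l, hexp]
        field_simp
        ring
      have hT : auxT β l = -μ⁻¹ := by
        apply mul_left_cancel₀ hl
        rw [hkey]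
        field_simp
      refine ⟨β, ?_⟩
      rw [hT]
      simp [mul_inv_cancel₀ hμ]
  set x := -(auxT β b) with hx
  have h1 : φ (a * x) = 1 := by
    rw [map_mul, hx, map_neg, phi_auxT]
    exact hβ
  have hmem : (1 : ℂ) ∈ spectrum ℂ (a * x) := by
    rw [← h1]; exact AlgHom.apply_mem_spectrum φ (a * x)
  rw [h x] at hmem
  have hbx : b * x = 1 - exp (β • b) := by
    rw [hx, mul_neg, mul_auxT]; ring
  rw [hbx] at hmem
  have hnu : ¬ IsUnit ((algebraMap ℂ A) 1 - (1 - exp (β • b))) := hmem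
  apply hnu
  have heq : (algebraMap ℂ A) 1 - (1 - exp (β • b)) = exp (β • b) := by
    rw [map_one]; ring
  rw [heq]
  exact isUnit_exp_of_mem_ball (𝕂 := ℂ) ((expSeries_radius_eq_top ℂ A).symm ▸ edist_lt_top _ _)

end aux

/-- Theorem 2.5: In a commutative semisimple complex unital Banach algebra,
`σ(a x) = σ(b x)` for all `x` implies `a = b`. -/
theorem eq_of_spectrum_mul_eq_comm
    {A : Type*} [NormedCommRing A] [NormedAlgebra ℂ A] [CompleteSpace A] [NormOneClass A]
    (hss : ∀ a : A, (∀ x : A, spectrum ℂ (a * x) = {0}) → a = 0)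
    (a b : A)
    (h : ∀ x : A, spectrum ℂ (a * x) = spectrum ℂ (b * x)) :
    a = b := by
  have hchar : ∀ φ : characterSpace ℂ A, φ a = φ b := by
    intro φ
    by_cases ha : φ a = 0
    · by_cases hb : φ b = 0
      · rw [ha, hb]
      · exact (char_eq_of_spec_eq b a (fun x => (h x).symm) φ hb).symm
    · exact char_eq_of_spec_eq a b h φ ha
  have hab : a - b = 0 := by
    apply hss
    intro x
    have hnontriv : Nontrivial A := ⟨1, 0, by
      intro h10
      have := norm_one (α := A)
      rw [h10, norm_zero] at this
      norm_num at this⟩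
    have hsub : ∀ z ∈ spectrum ℂ ((a - b) * x), z = 0 := by
      intro z hz
      obtain ⟨φ, hφ⟩ := WeakDual.CharacterSpace.mem_spectrum_iff_exists.mp hz
      rw [← hφ, map_mul, map_sub, hchar φ, sub_self, zero_mul]
    have hne : (spectrum ℂ ((a - b) * x)).Nonempty := spectrum.nonempty _
    obtain ⟨z, hz⟩ := hne
    have hz0 := hsub z hz
    rw [Set.eq_singleton_iff_unique_mem]
    exact ⟨hz0 ▸ hz, hsub⟩
  exact sub_eq_zero.mp hab
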